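/- Let b > 0 and let β < 1 and λ < 1 be real numbers. Define g : (0,∞) → ℝ by g(k) = (1/k) · [√(1−β) sinh(k√(1−β) b) + √(1−λ) cosh(k√(1−β) b)] / [√(1−β) cosh(k√(1−β) b) + √(1−λ) sinh(k√(1−β) b)]. Then g is strictly decreasing on (0,∞). -/
import Mathlib


/-- The function `g(k) = (1/k)·(√(1-β) sinh(k√(1-β)b) + √(1-λ) cosh(k√(1-β)b)) /
(√(1-β) cosh(k√(1-β)b) + √(1-λ) sinh(k√(1-β)b))` is strictly decreasing on `(0,∞)`. -/
theorem step_rhs_strictAnti (b : ℝ) (hb : 0 < b) (bet lam : ℝ)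
    (hbet : bet < 1) (hlam : lam < 1) (g : ℝ → ℝ)
    (hg : ∀ k : ℝ, 0 < k → g k = (1 / k) *
      ((Real.sqrt (1 - bet) * Real.sinh (k * Real.sqrt (1 - bet) * b) +
        Real.sqrt (1 - lam) * Real.cosh (k * Real.sqrt (1 - bet) * b)) /
       (Real.sqrt (1 - bet) * Real.cosh (k * Real.sqrt (1 - bet) * b) +
        Real.sqrt (1 - lam) * Real.sinh (k * Real.sqrt (1 - bet) * b)))) :
    StrictAntiOn g (Set.Ioi 0) := by
  set s := Real.sqrt (1 - bet) with hsdef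
  set t := Real.sqrt (1 - lam) with htdef
  have hs : 0 < s := Real.sqrt_pos.2 (by linarith)
  have ht : 0 < t := Real.sqrt_pos.2 (by linarith)
  set N : ℝ → ℝ := fun k => s * Real.sinh (k * s * b) + t * Real.cosh (k * s * b) with hNdef
  set D : ℝ → ℝ := fun k => s * Real.cosh (k * s * b) + t * Real.sinh (k * s * b) with hDdef
  set f : ℝ → ℝ := fun k => N k / (D k * k) with hfdef
  -- basic positivity facts for k > 0
  have hDpos : ∀ k : ℝ, 0 < k → 0 < D k := by
    intro k hk
    have hx : 0 < k * s * b := by positivity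
    have h1 : 0 < Real.sinh (k * s * b) := Real.sinh_pos_iff.2 hx
    have h2 : (0:ℝ) < Real.cosh (k * s * b) := lt_of_lt_of_le one_pos (Real.one_le_cosh _)
    have := mul_pos hs h2
    have := mul_pos ht h1
    simp only [hDdef]
    positivity
  -- derivative of f is negative on Ioi 0
  have key : ∀ k : ℝ, 0 < k → ∃ f' : ℝ, HasDerivAt f f' k ∧ f' < 0 := by
    intro k hk
    have hx : 0 < k * s * b := by positivity
    have hSpos : 0 < Real.sinh (k * s * b) := Real.sinh_pos_iff.2 hx
    have hC1 : (1:ℝ) ≤ Real.cosh (k * s * b) := Real.one_le_cosh _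
    have hSx : k * s * b < Real.sinh (k * s * b) := Real.self_lt_sinh_iff.2 hx
    have hC2 : Real.cosh (k * s * b) ^ 2 = Real.sinh (k * s * b) ^ 2 + 1 := Real.cosh_sq _
    have hDk : 0 < D k := hDpos k hk
    have hDkk : D k * k ≠ 0 := by positivity
    have harg : HasDerivAt (fun k : ℝ => k * s * b) (1 * s * b) k :=
      ((hasDerivAt_id k).mul_const s).mul_const b
    have hN' : HasDerivAt N
        (s * (Real.cosh (k * s * b) * (1 * s * b)) + t * (Real.sinh (k * s * b) * (1 * s * b))) k :=
      (harg.sinh.const_mul s).add (harg.cosh.const_mul t)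
    have hD' : HasDerivAt D
        (s * (Real.sinh (k * s * b) * (1 * s * b)) + t * (Real.cosh (k * s * b) * (1 * s * b))) k :=
      (harg.cosh.const_mul s).add (harg.sinh.const_mul t)
    have hDen : HasDerivAt (fun k => D k * k)
        ((s * (Real.sinh (k * s * b) * (1 * s * b)) + t * (Real.cosh (k * s * b) * (1 * s * b))) * k
          + D k * 1) k := hD'.mul (hasDerivAt_id k)
    have hf' := hN'.div hDen hDkk
    refine ⟨_, hf', ?_⟩
    apply div_neg_of_neg_of_pos
    · -- numerator is negative
      set S := Real.sinh (k * s * b) with hS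
      set C := Real.cosh (k * s * b) with hC
      have hSC : k * s * b < S * C := by nlinarith
      have h1 : 0 < (S * C - k * s * b) * (s ^ 2 + t ^ 2) :=
        mul_pos (sub_pos.2 hSC) (by positivity)
      have h2 : 0 < s * t * (S ^ 2 + C ^ 2) := by positivity
      have hmain : (s * b * k) * (s ^ 2 - t ^ 2) < (s * S + t * C) * (s * C + t * S) := by
        nlinarith [h1, h2, mul_pos hx (pow_pos ht 2)]
      simp only [hNdef, hDdef, ← hS, ← hC]
      have hnum : (s * (C * (1 * s * b)) + t * (S * (1 * s * b))) * ((s * C + t * S) * k) -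
          (s * S + t * C) * ((s * (S * (1 * s * b)) + t * (C * (1 * s * b))) * k +
            (s * C + t * S) * 1)
          = s * b * k * (s ^ 2 - t ^ 2) - (s * S + t * C) * (s * C + t * S) := by
        linear_combination (s * b * k * (s ^ 2 - t ^ 2)) * hC2
      rw [hnum]
      linarith [hmain]
    · positivity
  -- f is strictly antitone on Ioi 0
  have hf : StrictAntiOn f (Set.Ioi 0) := by
    apply strictAntiOn_of_deriv_neg (convex_Ioi 0)
    · intro k hk
      obtain ⟨f', hf', _⟩ := key k hk
      exact hf'.continuousAt.continuousWithinAt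
    · intro k hk
      rw [interior_Ioi] at hk
      obtain ⟨f', hf', hneg⟩ := key k hk
      rwa [hf'.deriv]
  -- transfer to g
  intro x hx y hy hxy
  have hx' : (0:ℝ) < x := hx
  have hy' : (0:ℝ) < y := hy
  have ex : g x = f x := by
    rw [hg x hx']
    simp only [hfdef]
    rw [div_mul_eq_div_div, one_div_mul_eq_div]
  have ey : g y = f y := by
    rw [hg y hy']
    simp only [hfdef]
    rw [div_mul_eq_div_div, one_div_mul_eq_div]
  rw [ex, ey]
  exact hf hx hy hxy
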